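/- For every n ≥ 1 and p > 1 there exists a constant c = c(n,p) > 0 such that for all ξ, η ∈ ℝ^k with ξ ≠ η and all μ ∈ [0,1], c⁻¹(μ² + |ξ|² + |η|²)^((p-2)/2) ≤ |V_p(ξ) - V_p(η)|²/|ξ - η|² ≤ c(μ² + |ξ|² + |η|²)^((p-2)/2). -/

import Mathlib

set_option maxHeartbeats 1000000

open MeasureTheory

private lemma affine_nonneg {α β s m : ℝ} (h1 : -m ≤ s) (h2 : s ≤ m)
    (hA : 0 ≤ α + β * m) (hB : 0 ≤ α - β * m) : 0 ≤ α + β * s := by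
  rcases le_total 0 β with hβ | hβ
  · nlinarith
  · nlinarith

private lemma rpow_comparable {A B q : ℝ} (hA : 0 < A) (h1 : A ≤ B) (h2 : B ≤ 2 * A) :
    B ^ q ≤ 2 ^ |q| * A ^ q ∧ A ^ q ≤ 2 ^ |q| * B ^ q := by
  have hB : 0 < B := hA.trans_le h1
  have h2q : (1:ℝ) ≤ 2 ^ |q| := by
    calc (1:ℝ) = 2 ^ (0:ℝ) := by rw [Real.rpow_zero]
    _ ≤ 2 ^ |q| := Real.rpow_le_rpow_of_exponent_le one_le_two (abs_nonneg q)
  rcases le_total 0 q with hq | hq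
  · rw [abs_of_nonneg hq]
    constructor
    · calc B ^ q ≤ (2 * A) ^ q := Real.rpow_le_rpow hB.le h2 hq
        _ = 2 ^ q * A ^ q := Real.mul_rpow (by norm_num) hA.le
    · calc A ^ q ≤ B ^ q := Real.rpow_le_rpow hA.le h1 hq
        _ ≤ 2 ^ q * B ^ q := by
            have := Real.rpow_nonneg hB.le q
            nlinarith [abs_of_nonneg hq ▸ h2q]
  · rw [abs_of_nonpos hq]
    constructor
    · calc B ^ q ≤ A ^ q := Real.rpow_le_rpow_of_nonpos hA h1 hq
        _ ≤ 2 ^ (-q) * A ^ q := by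
            have := Real.rpow_nonneg hA.le q
            nlinarith [abs_of_nonpos hq ▸ h2q]
    · calc A ^ q ≤ (B / 2) ^ q := by
            refine Real.rpow_le_rpow_of_nonpos (by linarith) (by linarith) hq
        _ = 2 ^ (-q) * B ^ q := by
            rw [Real.div_rpow hB.le (by norm_num), Real.rpow_neg (by norm_num)]
            ring

private noncomputable def Fm (p μ t : ℝ) : ℝ := (μ ^ 2 + t ^ 2) ^ ((p - 2) / 4) * t

private lemma Fm_hasDerivAt (p μ t : ℝ) (h : 0 < μ ^ 2 + t ^ 2) :
    HasDerivAt (Fm p μ)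
      ((μ ^ 2 + t ^ 2) ^ ((p - 2) / 4 - 1) * (μ ^ 2 + p / 2 * t ^ 2)) t := by
  have h1 : HasDerivAt (fun t : ℝ => μ ^ 2 + t ^ 2) (2 * t) t := by
    simpa using (hasDerivAt_pow 2 t).const_add (μ ^ 2)
  have h2 : HasDerivAt (fun t : ℝ => (μ ^ 2 + t ^ 2) ^ ((p - 2) / 4))
      ((p - 2) / 4 * (μ ^ 2 + t ^ 2) ^ ((p - 2) / 4 - 1) * (2 * t)) t :=
    by have := (Real.hasDerivAt_rpow_const (x := μ ^ 2 + t ^ 2) (p := (p - 2) / 4) (Or.inl h.ne')).comp t h1; exact this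
  have h3 := h2.mul (hasDerivAt_id t)
  have hre : (μ ^ 2 + t ^ 2) ^ ((p - 2) / 4) =
      (μ ^ 2 + t ^ 2) ^ ((p - 2) / 4 - 1) * (μ ^ 2 + t ^ 2) := by
    rw [← Real.rpow_add_one h.ne' ((p - 2) / 4 - 1)]
    norm_num
  simp only [id_eq] at h3
  refine h3.congr_deriv ?_
  rw [hre]
  ring

private lemma Fm_continuousOn (p μ : ℝ) (hp : 1 < p) :
    ContinuousOn (Fm p μ) (Set.Ici 0) := by
  rcases eq_or_ne μ 0 with hμ | hμ
  · subst hμ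
    have hcont : Continuous fun t : ℝ => t ^ (p / 2) :=
      continuous_iff_continuousAt.2 fun x =>
        Real.continuousAt_rpow_const x _ (Or.inr (by positivity))
    refine ContinuousOn.congr hcont.continuousOn ?_
    intro t ht
    simp only [Fm]
    have ht' : (0:ℝ) ≤ t := ht
    have h0 : (0:ℝ) ^ 2 + t ^ 2 = t ^ 2 := by ring
    rw [h0, ← Real.rpow_natCast t 2, ← Real.rpow_mul ht']
    nth_rewrite 2 [← Real.rpow_one t]
    rw [← Real.rpow_add' ht' (by push_cast; intro hcon; nlinarith)]
    congr 1
    push_cast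
    ring
  · have : Continuous (Fm p μ) := by
      refine Continuous.mul ?_ continuous_id
      refine Continuous.rpow_const (by continuity) fun t => Or.inl ?_
      positivity
    exact this.continuousOn

private noncomputable def Ep (p : ℝ) : ℝ := 2 ^ |(p - 2) / 4|
private noncomputable def C1 (p : ℝ) : ℝ := min 1 (p / 2) / (2 * Ep p)
private noncomputable def C2 (p : ℝ) : ℝ := max 1 (p / 2) * (2 * Ep p)

private lemma Ep_pos (p : ℝ) : 0 < Ep p := Real.rpow_pos_of_pos two_pos _

private lemma one_le_Ep (p : ℝ) : 1 ≤ Ep p := by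
  calc (1:ℝ) = 2 ^ (0:ℝ) := by rw [Real.rpow_zero]
  _ ≤ Ep p := Real.rpow_le_rpow_of_exponent_le one_le_two (abs_nonneg _)

private lemma C1_pos {p : ℝ} (hp : 1 < p) : 0 < C1 p := by
  have h1 := Ep_pos p
  have : (0:ℝ) < min 1 (p / 2) := lt_min one_pos (by linarith)
  exact div_pos this (by linarith)

private lemma C2_pos {p : ℝ} (hp : 1 < p) : 0 < C2 p := by
  have h1 := Ep_pos p
  have h2 : (0:ℝ) < max 1 (p / 2) := lt_max_of_lt_left one_pos
  have : (0:ℝ) < 2 * Ep p := by linarith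
  exact mul_pos h2 this

private lemma C1_le {p : ℝ} (hp : 1 < p) : C1 p ≤ min 1 (p/2) := by
  have h1 := one_le_Ep p
  have h2 : (0:ℝ) < min 1 (p / 2) := lt_min one_pos (by linarith)
  rw [C1, div_le_iff₀ (by linarith)]
  nlinarith

private lemma le_C2 {p : ℝ} (hp : 1 < p) : max 1 (p/2) ≤ C2 p := by
  have h1 := one_le_Ep p
  have h2 : (0:ℝ) < max 1 (p / 2) := lt_max_of_lt_left one_pos
  rw [C2]
  nlinarith

private lemma scalar_diff {p : ℝ} (hp : 1 < p) {μ x y : ℝ} (hμ : 0 ≤ μ)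
    (hy : 0 ≤ y) (hyx : y ≤ x) (hx : 0 < μ ^ 2 + x ^ 2) :
    C1 p * (μ ^ 2 + x ^ 2 + y ^ 2) ^ ((p - 2) / 4) * (x - y) ≤ Fm p μ x - Fm p μ y ∧
      Fm p μ x - Fm p μ y ≤ C2 p * (μ ^ 2 + x ^ 2 + y ^ 2) ^ ((p - 2) / 4) * (x - y) := by
  have hT : (0:ℝ) < μ ^ 2 + x ^ 2 + y ^ 2 := by nlinarith [sq_nonneg y]
  have hTq0 : (0:ℝ) ≤ (μ ^ 2 + x ^ 2 + y ^ 2) ^ ((p - 2) / 4) := Real.rpow_nonneg hT.le _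
  have hAq0 : (0:ℝ) ≤ (μ ^ 2 + x ^ 2) ^ ((p - 2) / 4) := Real.rpow_nonneg hx.le _
  have hc := rpow_comparable (q := (p - 2) / 4) hx
    (by nlinarith [sq_nonneg y] : μ ^ 2 + x ^ 2 ≤ μ ^ 2 + x ^ 2 + y ^ 2)
    (by nlinarith [sq_nonneg y, sq_nonneg (x - y), sq_nonneg μ] :
      μ ^ 2 + x ^ 2 + y ^ 2 ≤ 2 * (μ ^ 2 + x ^ 2))
  have hc1 : (μ ^ 2 + x ^ 2 + y ^ 2) ^ ((p - 2) / 4) ≤ Ep p * (μ ^ 2 + x ^ 2) ^ ((p - 2) / 4) := by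
    rw [Ep]; exact hc.1
  have hc2 : (μ ^ 2 + x ^ 2) ^ ((p - 2) / 4) ≤ Ep p * (μ ^ 2 + x ^ 2 + y ^ 2) ^ ((p - 2) / 4) := by
    rw [Ep]; exact hc.2
  rcases eq_or_lt_of_le hyx with heq | hlt
  · subst heq; constructor <;> simp
  -- MVT setup
  obtain ⟨θ, hθ, hsl⟩ := exists_hasDerivAt_eq_slope (Fm p μ)
    (fun θ => (μ ^ 2 + θ ^ 2) ^ ((p - 2) / 4 - 1) * (μ ^ 2 + p / 2 * θ ^ 2)) hlt
    ((Fm_continuousOn p μ hp).mono (fun t ht => le_trans hy ht.1))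
    (fun θ hθ => Fm_hasDerivAt p μ θ
      (by nlinarith [hθ.1, sq_nonneg μ, mul_pos (lt_of_le_of_lt hy hθ.1) (lt_of_le_of_lt hy hθ.1)]))
  have hθ0 : 0 < θ := lt_of_le_of_lt hy hθ.1
  have hBθ : 0 < μ ^ 2 + θ ^ 2 := by positivity
  have hxy0 : 0 < x - y := by linarith
  rw [eq_div_iff hxy0.ne'] at hsl
  have hslope : Fm p μ x - Fm p μ y =
      ((μ ^ 2 + θ ^ 2) ^ ((p - 2) / 4 - 1) * (μ ^ 2 + p / 2 * θ ^ 2)) * (x - y) := hsl.symm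
  have hmin : (0:ℝ) < min 1 (p / 2) := lt_min one_pos (by linarith)
  have hlow : min 1 (p / 2) * (μ ^ 2 + θ ^ 2) ≤ μ ^ 2 + p / 2 * θ ^ 2 := by
    rcases le_total 1 (p / 2) with h | h
    · rw [min_eq_left h]
      have := mul_nonneg (by linarith : (0:ℝ) ≤ p / 2 - 1) (sq_nonneg θ)
      linarith
    · rw [min_eq_right h]
      have := mul_nonneg (by linarith : (0:ℝ) ≤ 1 - p / 2) (sq_nonneg μ)
      linarith
  have hup : μ ^ 2 + p / 2 * θ ^ 2 ≤ max 1 (p / 2) * (μ ^ 2 + θ ^ 2) := by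
    rcases le_total 1 (p / 2) with h | h
    · rw [max_eq_right h]
      have := mul_nonneg (by linarith : (0:ℝ) ≤ p / 2 - 1) (sq_nonneg μ)
      linarith
    · rw [max_eq_left h]
      have := mul_nonneg (by linarith : (0:ℝ) ≤ 1 - p / 2) (sq_nonneg θ)
      linarith
  have hrepow : (μ ^ 2 + θ ^ 2) ^ ((p - 2) / 4 - 1) * (μ ^ 2 + θ ^ 2)
      = (μ ^ 2 + θ ^ 2) ^ ((p - 2) / 4) := by
    rw [← Real.rpow_add_one hBθ.ne' ((p - 2) / 4 - 1)]; norm_num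
  have hpow1 : 0 < (μ ^ 2 + θ ^ 2) ^ ((p - 2) / 4 - 1) := Real.rpow_pos_of_pos hBθ _
  have hdlow : min 1 (p / 2) * (μ ^ 2 + θ ^ 2) ^ ((p - 2) / 4)
      ≤ (μ ^ 2 + θ ^ 2) ^ ((p - 2) / 4 - 1) * (μ ^ 2 + p / 2 * θ ^ 2) := by
    calc min 1 (p / 2) * (μ ^ 2 + θ ^ 2) ^ ((p - 2) / 4)
        = (μ ^ 2 + θ ^ 2) ^ ((p - 2) / 4 - 1) * (min 1 (p / 2) * (μ ^ 2 + θ ^ 2)) := by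
          rw [← hrepow]; ring
      _ ≤ _ := mul_le_mul_of_nonneg_left hlow hpow1.le
  have hdup : (μ ^ 2 + θ ^ 2) ^ ((p - 2) / 4 - 1) * (μ ^ 2 + p / 2 * θ ^ 2)
      ≤ max 1 (p / 2) * (μ ^ 2 + θ ^ 2) ^ ((p - 2) / 4) := by
    calc (μ ^ 2 + θ ^ 2) ^ ((p - 2) / 4 - 1) * (μ ^ 2 + p / 2 * θ ^ 2)
        ≤ (μ ^ 2 + θ ^ 2) ^ ((p - 2) / 4 - 1) * (max 1 (p / 2) * (μ ^ 2 + θ ^ 2)) :=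
          mul_le_mul_of_nonneg_left hup hpow1.le
      _ = max 1 (p / 2) * (μ ^ 2 + θ ^ 2) ^ ((p - 2) / 4) := by rw [← hrepow]; ring
  have hθT : μ ^ 2 + θ ^ 2 ≤ μ ^ 2 + x ^ 2 + y ^ 2 := by
    nlinarith [hθ.2, sq_nonneg y, mul_pos hθ0 hθ0]
  have hid : Fm p μ x - Fm p μ y = (μ ^ 2 + x ^ 2) ^ ((p - 2) / 4) * (x - y)
      + ((μ ^ 2 + x ^ 2) ^ ((p - 2) / 4) - (μ ^ 2 + y ^ 2) ^ ((p - 2) / 4)) * y := by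
    simp only [Fm]; ring
  rcases le_total 0 ((p - 2) / 4) with hq | hq
  · constructor
    · -- lower bound, algebraic
      have hBy : (μ ^ 2 + y ^ 2) ^ ((p - 2) / 4) ≤ (μ ^ 2 + x ^ 2) ^ ((p - 2) / 4) :=
        Real.rpow_le_rpow (by positivity) (by nlinarith) hq
      have hC1Ep : C1 p * Ep p ≤ 1 := by
        have hEp := Ep_pos p
        have : C1 p * Ep p = min 1 (p / 2) / 2 := by
          rw [C1]; field_simp
        rw [this]
        have : min 1 (p / 2) ≤ 1 := min_le_left _ _
        linarith
      have h5 : C1 p * (μ ^ 2 + x ^ 2 + y ^ 2) ^ ((p - 2) / 4)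
          ≤ (μ ^ 2 + x ^ 2) ^ ((p - 2) / 4) := by
        calc C1 p * (μ ^ 2 + x ^ 2 + y ^ 2) ^ ((p - 2) / 4)
            ≤ C1 p * (Ep p * (μ ^ 2 + x ^ 2) ^ ((p - 2) / 4)) :=
              mul_le_mul_of_nonneg_left hc1 (C1_pos hp).le
          _ = (C1 p * Ep p) * (μ ^ 2 + x ^ 2) ^ ((p - 2) / 4) := by ring
          _ ≤ 1 * (μ ^ 2 + x ^ 2) ^ ((p - 2) / 4) := mul_le_mul_of_nonneg_right hC1Ep hAq0
          _ = _ := one_mul _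
      have h6 := mul_le_mul_of_nonneg_right h5 hxy0.le
      have h7 : 0 ≤ ((μ ^ 2 + x ^ 2) ^ ((p - 2) / 4) - (μ ^ 2 + y ^ 2) ^ ((p - 2) / 4)) * y :=
        mul_nonneg (by linarith) hy
      linarith
    · -- upper bound, MVT
      have h6 : (μ ^ 2 + θ ^ 2) ^ ((p - 2) / 4) ≤ (μ ^ 2 + x ^ 2 + y ^ 2) ^ ((p - 2) / 4) :=
        Real.rpow_le_rpow hBθ.le hθT hq
      have h7 : (μ ^ 2 + θ ^ 2) ^ ((p - 2) / 4 - 1) * (μ ^ 2 + p / 2 * θ ^ 2)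
          ≤ C2 p * (μ ^ 2 + x ^ 2 + y ^ 2) ^ ((p - 2) / 4) := by
        calc (μ ^ 2 + θ ^ 2) ^ ((p - 2) / 4 - 1) * (μ ^ 2 + p / 2 * θ ^ 2)
            ≤ max 1 (p / 2) * (μ ^ 2 + θ ^ 2) ^ ((p - 2) / 4) := hdup
          _ ≤ max 1 (p / 2) * (μ ^ 2 + x ^ 2 + y ^ 2) ^ ((p - 2) / 4) :=
              mul_le_mul_of_nonneg_left h6 (le_trans zero_le_one (le_max_left _ _))
          _ ≤ C2 p * (μ ^ 2 + x ^ 2 + y ^ 2) ^ ((p - 2) / 4) :=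
              mul_le_mul_of_nonneg_right (le_C2 hp) hTq0
      rw [hslope]
      exact mul_le_mul_of_nonneg_right h7 hxy0.le
  · constructor
    · -- lower bound, MVT
      have h6 : (μ ^ 2 + x ^ 2 + y ^ 2) ^ ((p - 2) / 4) ≤ (μ ^ 2 + θ ^ 2) ^ ((p - 2) / 4) :=
        Real.rpow_le_rpow_of_nonpos hBθ hθT hq
      have h7 : C1 p * (μ ^ 2 + x ^ 2 + y ^ 2) ^ ((p - 2) / 4)
          ≤ (μ ^ 2 + θ ^ 2) ^ ((p - 2) / 4 - 1) * (μ ^ 2 + p / 2 * θ ^ 2) := by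
        calc C1 p * (μ ^ 2 + x ^ 2 + y ^ 2) ^ ((p - 2) / 4)
            ≤ min 1 (p / 2) * (μ ^ 2 + x ^ 2 + y ^ 2) ^ ((p - 2) / 4) :=
              mul_le_mul_of_nonneg_right (C1_le hp) hTq0
          _ ≤ min 1 (p / 2) * (μ ^ 2 + θ ^ 2) ^ ((p - 2) / 4) :=
              mul_le_mul_of_nonneg_left h6 hmin.le
          _ ≤ _ := hdlow
      rw [hslope]
      exact mul_le_mul_of_nonneg_right h7 hxy0.le
    · -- upper bound, algebraic
      have hsecond : ((μ ^ 2 + x ^ 2) ^ ((p - 2) / 4) - (μ ^ 2 + y ^ 2) ^ ((p - 2) / 4)) * y ≤ 0 := by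
        rcases eq_or_lt_of_le hy with h0 | h0
        · rw [← h0]; simp
        · have hBy0 : (0:ℝ) < μ ^ 2 + y ^ 2 := by positivity
          have hmono := Real.rpow_le_rpow_of_nonpos hBy0
            (by nlinarith : μ ^ 2 + y ^ 2 ≤ μ ^ 2 + x ^ 2) hq
          exact mul_nonpos_of_nonpos_of_nonneg (by linarith) hy
      have h8 : Ep p ≤ C2 p := by
        have h9 := one_le_Ep p
        have h10 : (1:ℝ) ≤ max 1 (p / 2) := le_max_left _ _
        have h11 := mul_le_mul_of_nonneg_right h10
          (by linarith [Ep_pos p] : (0:ℝ) ≤ 2 * Ep p)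
        rw [C2]; linarith [Ep_pos p]
      have h5 : (μ ^ 2 + x ^ 2) ^ ((p - 2) / 4)
          ≤ C2 p * (μ ^ 2 + x ^ 2 + y ^ 2) ^ ((p - 2) / 4) := by
        calc (μ ^ 2 + x ^ 2) ^ ((p - 2) / 4)
            ≤ Ep p * (μ ^ 2 + x ^ 2 + y ^ 2) ^ ((p - 2) / 4) := hc2
          _ ≤ C2 p * (μ ^ 2 + x ^ 2 + y ^ 2) ^ ((p - 2) / 4) :=
              mul_le_mul_of_nonneg_right h8 hTq0
      have h6 := mul_le_mul_of_nonneg_right h5 hxy0.le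
      linarith

private lemma scalar_sum {p : ℝ} (hp : 1 < p) {μ x y : ℝ} (hμ : 0 ≤ μ)
    (hy : 0 ≤ y) (hyx : y ≤ x) (hx : 0 < μ ^ 2 + x ^ 2) :
    C1 p * (μ ^ 2 + x ^ 2 + y ^ 2) ^ ((p - 2) / 4) * (x + y) ≤ Fm p μ x + Fm p μ y ∧
      Fm p μ x + Fm p μ y ≤ C2 p * (μ ^ 2 + x ^ 2 + y ^ 2) ^ ((p - 2) / 4) * (x + y) := by
  have hx0 : (0:ℝ) ≤ x := le_trans hy hyx
  have hT : (0:ℝ) < μ ^ 2 + x ^ 2 + y ^ 2 := by nlinarith [sq_nonneg y]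
  have hTq0 : (0:ℝ) ≤ (μ ^ 2 + x ^ 2 + y ^ 2) ^ ((p - 2) / 4) := Real.rpow_nonneg hT.le _
  have hAq0 : (0:ℝ) ≤ (μ ^ 2 + x ^ 2) ^ ((p - 2) / 4) := Real.rpow_nonneg hx.le _
  have hc := rpow_comparable (q := (p - 2) / 4) hx
    (by nlinarith [sq_nonneg y] : μ ^ 2 + x ^ 2 ≤ μ ^ 2 + x ^ 2 + y ^ 2)
    (by nlinarith [sq_nonneg y, sq_nonneg (x - y), sq_nonneg μ] :
      μ ^ 2 + x ^ 2 + y ^ 2 ≤ 2 * (μ ^ 2 + x ^ 2))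
  have hc1 : (μ ^ 2 + x ^ 2 + y ^ 2) ^ ((p - 2) / 4) ≤ Ep p * (μ ^ 2 + x ^ 2) ^ ((p - 2) / 4) := by
    rw [Ep]; exact hc.1
  have hc2 : (μ ^ 2 + x ^ 2) ^ ((p - 2) / 4) ≤ Ep p * (μ ^ 2 + x ^ 2 + y ^ 2) ^ ((p - 2) / 4) := by
    rw [Ep]; exact hc.2
  have hFy0 : 0 ≤ Fm p μ y := mul_nonneg (Real.rpow_nonneg (by positivity) _) hy
  have hFx : Fm p μ x = (μ ^ 2 + x ^ 2) ^ ((p - 2) / 4) * x := rfl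
  have hd := (scalar_diff hp hμ hy hyx hx).1
  have hFyx : Fm p μ y ≤ Fm p μ x := by
    have h0 : 0 ≤ C1 p * (μ ^ 2 + x ^ 2 + y ^ 2) ^ ((p - 2) / 4) * (x - y) :=
      mul_nonneg (mul_nonneg (C1_pos hp).le hTq0) (by linarith)
    linarith
  constructor
  · have hCE : C1 p * (2 * Ep p) = min 1 (p / 2) := by
      have := Ep_pos p
      rw [C1]; field_simp
    have e1 : C1 p * (μ ^ 2 + x ^ 2 + y ^ 2) ^ ((p - 2) / 4) * (x + y)
        ≤ C1 p * (Ep p * (μ ^ 2 + x ^ 2) ^ ((p - 2) / 4)) * (x + y) :=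
      mul_le_mul_of_nonneg_right (mul_le_mul_of_nonneg_left hc1 (C1_pos hp).le) (by linarith)
    have e2 : C1 p * (Ep p * (μ ^ 2 + x ^ 2) ^ ((p - 2) / 4)) * (x + y)
        ≤ C1 p * (Ep p * (μ ^ 2 + x ^ 2) ^ ((p - 2) / 4)) * (2 * x) :=
      mul_le_mul_of_nonneg_left (by linarith)
        (mul_nonneg (C1_pos hp).le (mul_nonneg (Ep_pos p).le hAq0))
    have e3 : C1 p * (Ep p * (μ ^ 2 + x ^ 2) ^ ((p - 2) / 4)) * (2 * x)
        = (C1 p * (2 * Ep p)) * ((μ ^ 2 + x ^ 2) ^ ((p - 2) / 4) * x) := by ring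
    rw [hCE] at e3
    have e4 : min 1 (p / 2) * ((μ ^ 2 + x ^ 2) ^ ((p - 2) / 4) * x)
        ≤ (μ ^ 2 + x ^ 2) ^ ((p - 2) / 4) * x :=
      mul_le_of_le_one_left (mul_nonneg hAq0 hx0) (min_le_left _ _)
    linarith
  · have h10 : (1:ℝ) ≤ max 1 (p / 2) := le_max_left _ _
    have h2E : 2 * Ep p ≤ C2 p := by
      have h11 := mul_le_mul_of_nonneg_right h10 (by linarith [Ep_pos p] : (0:ℝ) ≤ 2 * Ep p)
      rw [C2]; linarith
    have e7 : (μ ^ 2 + x ^ 2) ^ ((p - 2) / 4) * x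
        ≤ (Ep p * (μ ^ 2 + x ^ 2 + y ^ 2) ^ ((p - 2) / 4)) * x :=
      mul_le_mul_of_nonneg_right hc2 hx0
    have e8 : (2 * Ep p) * ((μ ^ 2 + x ^ 2 + y ^ 2) ^ ((p - 2) / 4) * x)
        ≤ C2 p * ((μ ^ 2 + x ^ 2 + y ^ 2) ^ ((p - 2) / 4) * x) :=
      mul_le_mul_of_nonneg_right h2E (mul_nonneg hTq0 hx0)
    have e9 : C2 p * ((μ ^ 2 + x ^ 2 + y ^ 2) ^ ((p - 2) / 4) * x)
        ≤ C2 p * ((μ ^ 2 + x ^ 2 + y ^ 2) ^ ((p - 2) / 4) * (x + y)) :=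
      mul_le_mul_of_nonneg_left
        (mul_le_mul_of_nonneg_left (by linarith) hTq0) (C2_pos hp).le
    have e10 : C2 p * ((μ ^ 2 + x ^ 2 + y ^ 2) ^ ((p - 2) / 4) * (x + y))
        = C2 p * (μ ^ 2 + x ^ 2 + y ^ 2) ^ ((p - 2) / 4) * (x + y) := by ring
    rw [hFx] at hFyx ⊢
    linarith

private lemma squared_bounds {p : ℝ} (hp : 1 < p) {μ x y : ℝ} (hμ : 0 ≤ μ)
    (hy : 0 ≤ y) (hyx : y ≤ x) (hx : 0 < μ ^ 2 + x ^ 2) :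
    C1 p ^ 2 * (μ ^ 2 + x ^ 2 + y ^ 2) ^ ((p - 2) / 2) * (x - y) ^ 2
        ≤ (Fm p μ x - Fm p μ y) ^ 2 ∧
      (Fm p μ x - Fm p μ y) ^ 2
        ≤ C2 p ^ 2 * (μ ^ 2 + x ^ 2 + y ^ 2) ^ ((p - 2) / 2) * (x - y) ^ 2 ∧
      C1 p ^ 2 * (μ ^ 2 + x ^ 2 + y ^ 2) ^ ((p - 2) / 2) * (x + y) ^ 2
        ≤ (Fm p μ x + Fm p μ y) ^ 2 ∧
      (Fm p μ x + Fm p μ y) ^ 2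
        ≤ C2 p ^ 2 * (μ ^ 2 + x ^ 2 + y ^ 2) ^ ((p - 2) / 2) * (x + y) ^ 2 := by
  have hT : (0:ℝ) < μ ^ 2 + x ^ 2 + y ^ 2 := by nlinarith [sq_nonneg y]
  have hTq0 : (0:ℝ) ≤ (μ ^ 2 + x ^ 2 + y ^ 2) ^ ((p - 2) / 4) := Real.rpow_nonneg hT.le _
  have hTT : ((μ ^ 2 + x ^ 2 + y ^ 2) ^ ((p - 2) / 4)) ^ 2
      = (μ ^ 2 + x ^ 2 + y ^ 2) ^ ((p - 2) / 2) := by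
    rw [← Real.rpow_natCast ((μ ^ 2 + x ^ 2 + y ^ 2) ^ ((p - 2) / 4)) 2,
      ← Real.rpow_mul hT.le]
    congr 1
    push_cast
    ring
  obtain ⟨d1, d2⟩ := scalar_diff hp hμ hy hyx hx
  obtain ⟨s1, s2⟩ := scalar_sum hp hμ hy hyx hx
  have hL1 : 0 ≤ C1 p * (μ ^ 2 + x ^ 2 + y ^ 2) ^ ((p - 2) / 4) * (x - y) :=
    mul_nonneg (mul_nonneg (C1_pos hp).le hTq0) (by linarith)
  have hL2 : 0 ≤ C1 p * (μ ^ 2 + x ^ 2 + y ^ 2) ^ ((p - 2) / 4) * (x + y) :=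
    mul_nonneg (mul_nonneg (C1_pos hp).le hTq0) (by linarith)
  have e1 := pow_le_pow_left₀ hL1 d1 2
  have e2 := pow_le_pow_left₀ (le_trans hL1 d1) d2 2
  have e3 := pow_le_pow_left₀ hL2 s1 2
  have e4 := pow_le_pow_left₀ (le_trans hL2 s1) s2 2
  have r1 : (C1 p * (μ ^ 2 + x ^ 2 + y ^ 2) ^ ((p - 2) / 4) * (x - y)) ^ 2
      = C1 p ^ 2 * (μ ^ 2 + x ^ 2 + y ^ 2) ^ ((p - 2) / 2) * (x - y) ^ 2 := by
    rw [mul_pow, mul_pow, hTT]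
  have r2 : (C2 p * (μ ^ 2 + x ^ 2 + y ^ 2) ^ ((p - 2) / 4) * (x - y)) ^ 2
      = C2 p ^ 2 * (μ ^ 2 + x ^ 2 + y ^ 2) ^ ((p - 2) / 2) * (x - y) ^ 2 := by
    rw [mul_pow, mul_pow, hTT]
  have r3 : (C1 p * (μ ^ 2 + x ^ 2 + y ^ 2) ^ ((p - 2) / 4) * (x + y)) ^ 2
      = C1 p ^ 2 * (μ ^ 2 + x ^ 2 + y ^ 2) ^ ((p - 2) / 2) * (x + y) ^ 2 := by
    rw [mul_pow, mul_pow, hTT]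
  have r4 : (C2 p * (μ ^ 2 + x ^ 2 + y ^ 2) ^ ((p - 2) / 4) * (x + y)) ^ 2
      = C2 p ^ 2 * (μ ^ 2 + x ^ 2 + y ^ 2) ^ ((p - 2) / 2) * (x + y) ^ 2 := by
    rw [mul_pow, mul_pow, hTT]
  rw [r1] at e1
  rw [r2] at e2
  rw [r3] at e3
  rw [r4] at e4
  exact ⟨e1, e2, e3, e4⟩

private lemma key_aux {p : ℝ} (hp : 1 < p) {μ a b s : ℝ} (hμ : 0 ≤ μ) (ha : 0 ≤ a) (hb : 0 ≤ b)
    (hba : b ≤ a) (hs : |s| ≤ a * b) (hD : 0 < a ^ 2 + b ^ 2 - 2 * s) :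
    C1 p ^ 2 * (μ ^ 2 + a ^ 2 + b ^ 2) ^ ((p - 2) / 2) * (a ^ 2 + b ^ 2 - 2 * s)
        ≤ Fm p μ a ^ 2 + Fm p μ b ^ 2
          - 2 * ((μ ^ 2 + a ^ 2) ^ ((p - 2) / 4) * (μ ^ 2 + b ^ 2) ^ ((p - 2) / 4)) * s ∧
      Fm p μ a ^ 2 + Fm p μ b ^ 2
          - 2 * ((μ ^ 2 + a ^ 2) ^ ((p - 2) / 4) * (μ ^ 2 + b ^ 2) ^ ((p - 2) / 4)) * s
        ≤ C2 p ^ 2 * (μ ^ 2 + a ^ 2 + b ^ 2) ^ ((p - 2) / 2) * (a ^ 2 + b ^ 2 - 2 * s) := by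
  obtain ⟨hs1, hs2⟩ := abs_le.mp hs
  have ht1 : 0 ≤ b * (a - b) := mul_nonneg hb (by linarith)
  have ht2 : 0 ≤ a * (a - b) := mul_nonneg ha (by linarith)
  have hx : 0 < μ ^ 2 + a ^ 2 := by nlinarith [sq_nonneg μ]
  obtain ⟨q1, q2, q3, q4⟩ := squared_bounds hp hμ hb hba hx
  have hw : Fm p μ a * Fm p μ b
      = ((μ ^ 2 + a ^ 2) ^ ((p - 2) / 4) * (μ ^ 2 + b ^ 2) ^ ((p - 2) / 4)) * (a * b) := by
    simp only [Fm]; ring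
  set W := (μ ^ 2 + a ^ 2) ^ ((p - 2) / 4) * (μ ^ 2 + b ^ 2) ^ ((p - 2) / 4) with hW
  set TQ := (μ ^ 2 + a ^ 2 + b ^ 2) ^ ((p - 2) / 2) with hTQ
  constructor
  · have hA : 0 ≤ (Fm p μ a ^ 2 + Fm p μ b ^ 2 - C1 p ^ 2 * TQ * (a ^ 2 + b ^ 2))
        + (2 * (C1 p ^ 2 * TQ - W)) * (a * b) := by
      have he : (Fm p μ a ^ 2 + Fm p μ b ^ 2 - C1 p ^ 2 * TQ * (a ^ 2 + b ^ 2))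
          + (2 * (C1 p ^ 2 * TQ - W)) * (a * b)
          = (Fm p μ a - Fm p μ b) ^ 2 - C1 p ^ 2 * TQ * (a - b) ^ 2 := by
        linear_combination (2 : ℝ) * hw
      rw [he]
      linarith [q1]
    have hB : 0 ≤ (Fm p μ a ^ 2 + Fm p μ b ^ 2 - C1 p ^ 2 * TQ * (a ^ 2 + b ^ 2))
        - (2 * (C1 p ^ 2 * TQ - W)) * (a * b) := by
      have he : (Fm p μ a ^ 2 + Fm p μ b ^ 2 - C1 p ^ 2 * TQ * (a ^ 2 + b ^ 2))
          - (2 * (C1 p ^ 2 * TQ - W)) * (a * b)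
          = (Fm p μ a + Fm p μ b) ^ 2 - C1 p ^ 2 * TQ * (a + b) ^ 2 := by
        linear_combination (-2 : ℝ) * hw
      rw [he]
      linarith [q3]
    have := affine_nonneg hs1 hs2 hA hB
    linarith
  · have hA : 0 ≤ (C2 p ^ 2 * TQ * (a ^ 2 + b ^ 2) - Fm p μ a ^ 2 - Fm p μ b ^ 2)
        + (2 * (W - C2 p ^ 2 * TQ)) * (a * b) := by
      have he : (C2 p ^ 2 * TQ * (a ^ 2 + b ^ 2) - Fm p μ a ^ 2 - Fm p μ b ^ 2)
          + (2 * (W - C2 p ^ 2 * TQ)) * (a * b)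
          = C2 p ^ 2 * TQ * (a - b) ^ 2 - (Fm p μ a - Fm p μ b) ^ 2 := by
        linear_combination (-2 : ℝ) * hw
      rw [he]
      linarith [q2]
    have hB : 0 ≤ (C2 p ^ 2 * TQ * (a ^ 2 + b ^ 2) - Fm p μ a ^ 2 - Fm p μ b ^ 2)
        - (2 * (W - C2 p ^ 2 * TQ)) * (a * b) := by
      have he : (C2 p ^ 2 * TQ * (a ^ 2 + b ^ 2) - Fm p μ a ^ 2 - Fm p μ b ^ 2)
          - (2 * (W - C2 p ^ 2 * TQ)) * (a * b)
          = C2 p ^ 2 * TQ * (a + b) ^ 2 - (Fm p μ a + Fm p μ b) ^ 2 := by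
        linear_combination (2 : ℝ) * hw
      rw [he]
      linarith [q4]
    have := affine_nonneg hs1 hs2 hA hB
    linarith

private lemma key_bounds {p : ℝ} (hp : 1 < p) {μ a b s : ℝ} (hμ : 0 ≤ μ) (ha : 0 ≤ a)
    (hb : 0 ≤ b) (hs : |s| ≤ a * b) (hD : 0 < a ^ 2 + b ^ 2 - 2 * s) :
    C1 p ^ 2 * (μ ^ 2 + a ^ 2 + b ^ 2) ^ ((p - 2) / 2) * (a ^ 2 + b ^ 2 - 2 * s)
        ≤ Fm p μ a ^ 2 + Fm p μ b ^ 2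
          - 2 * ((μ ^ 2 + a ^ 2) ^ ((p - 2) / 4) * (μ ^ 2 + b ^ 2) ^ ((p - 2) / 4)) * s ∧
      Fm p μ a ^ 2 + Fm p μ b ^ 2
          - 2 * ((μ ^ 2 + a ^ 2) ^ ((p - 2) / 4) * (μ ^ 2 + b ^ 2) ^ ((p - 2) / 4)) * s
        ≤ C2 p ^ 2 * (μ ^ 2 + a ^ 2 + b ^ 2) ^ ((p - 2) / 2) * (a ^ 2 + b ^ 2 - 2 * s) := by
  rcases le_total b a with hba | hba
  · exact key_aux hp hμ ha hb hba hs hD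
  · have hs' : |s| ≤ b * a := by rw [mul_comm]; exact hs
    have hD' : 0 < b ^ 2 + a ^ 2 - 2 * s := by linarith
    have H := key_aux hp hμ hb ha hba hs' hD'
    have hbase : μ ^ 2 + b ^ 2 + a ^ 2 = μ ^ 2 + a ^ 2 + b ^ 2 := by ring
    rw [hbase] at H
    constructor
    · linarith [H.1]
    · linarith [H.2]

/-- equivalence of `V_p` differences with the standard elliptic quantity. -/
theorem Vp_difference_equivalence (n : ℕ) (hn : 1 ≤ n) (p : ℝ) (hp : 1 < p) :
    ∃ c : ℝ, 0 < c ∧ ∀ (k : ℕ) (μ : ℝ), μ ∈ Set.Icc (0:ℝ) 1 →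
      ∀ ξ η : EuclideanSpace ℝ (Fin k), ξ ≠ η →
        c⁻¹ * (μ ^ 2 + ‖ξ‖ ^ 2 + ‖η‖ ^ 2) ^ ((p - 2) / 2) ≤
            ‖((μ ^ 2 + ‖ξ‖ ^ 2) ^ ((p - 2) / 4) • ξ -
                (μ ^ 2 + ‖η‖ ^ 2) ^ ((p - 2) / 4) • η : EuclideanSpace ℝ (Fin k))‖ ^ 2 /
              ‖ξ - η‖ ^ 2 ∧
          ‖((μ ^ 2 + ‖ξ‖ ^ 2) ^ ((p - 2) / 4) • ξ -
                (μ ^ 2 + ‖η‖ ^ 2) ^ ((p - 2) / 4) • η : EuclideanSpace ℝ (Fin k))‖ ^ 2 /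
              ‖ξ - η‖ ^ 2 ≤
            c * (μ ^ 2 + ‖ξ‖ ^ 2 + ‖η‖ ^ 2) ^ ((p - 2) / 2) := by
  refine ⟨max (C1 p ^ 2)⁻¹ (C2 p ^ 2),
    lt_of_lt_of_le (pow_pos (C2_pos hp) 2) (le_max_right _ _), ?_⟩
  set c := max (C1 p ^ 2)⁻¹ (C2 p ^ 2) with hc
  have hcpos : 0 < c := lt_of_lt_of_le (pow_pos (C2_pos hp) 2) (le_max_right _ _)
  have hcinv : c⁻¹ ≤ C1 p ^ 2 := by
    have h1 : (C1 p ^ 2)⁻¹ ≤ c := le_max_left _ _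
    have h2 := inv_anti₀ (inv_pos.mpr (pow_pos (C1_pos hp) 2)) h1
    rwa [inv_inv] at h2
  have hC2c : C2 p ^ 2 ≤ c := le_max_right _ _
  intro k μ hμ ξ η hne
  have hμ0 : 0 ≤ μ := hμ.1
  have hApos : (0:ℝ) ≤ (μ ^ 2 + ‖ξ‖ ^ 2) ^ ((p - 2) / 4) :=
    Real.rpow_nonneg (by positivity) _
  have hBpos : (0:ℝ) ≤ (μ ^ 2 + ‖η‖ ^ 2) ^ ((p - 2) / 4) :=
    Real.rpow_nonneg (by positivity) _
  have hDpos : 0 < ‖ξ - η‖ ^ 2 := by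
    have h0 : ξ - η ≠ 0 := sub_ne_zero.mpr hne
    have := norm_pos_iff.mpr h0
    positivity
  have hD2 : ‖ξ - η‖ ^ 2 = ‖ξ‖ ^ 2 + ‖η‖ ^ 2 - 2 * (inner ℝ ξ η : ℝ) := by
    rw [norm_sub_sq_real]; ring
  have hN : ‖((μ ^ 2 + ‖ξ‖ ^ 2) ^ ((p - 2) / 4) • ξ -
      (μ ^ 2 + ‖η‖ ^ 2) ^ ((p - 2) / 4) • η : EuclideanSpace ℝ (Fin k))‖ ^ 2
      = Fm p μ ‖ξ‖ ^ 2 + Fm p μ ‖η‖ ^ 2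
        - 2 * ((μ ^ 2 + ‖ξ‖ ^ 2) ^ ((p - 2) / 4) * (μ ^ 2 + ‖η‖ ^ 2) ^ ((p - 2) / 4))
          * (inner ℝ ξ η : ℝ) := by
    rw [norm_sub_sq_real, norm_smul, norm_smul, real_inner_smul_left, real_inner_smul_right,
      Real.norm_eq_abs, Real.norm_eq_abs, abs_of_nonneg hApos, abs_of_nonneg hBpos]
    simp only [Fm]
    ring
  have hs : |(inner ℝ ξ η : ℝ)| ≤ ‖ξ‖ * ‖η‖ := abs_real_inner_le_norm ξ η
  have hDpos' : 0 < ‖ξ‖ ^ 2 + ‖η‖ ^ 2 - 2 * (inner ℝ ξ η : ℝ) := by rw [← hD2]; exact hDpos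
  have H := key_bounds hp hμ0 (norm_nonneg ξ) (norm_nonneg η) hs hDpos'
  have hT0 : (0:ℝ) ≤ (μ ^ 2 + ‖ξ‖ ^ 2 + ‖η‖ ^ 2) ^ ((p - 2) / 2) :=
    Real.rpow_nonneg (by positivity) _
  constructor
  · rw [le_div_iff₀ hDpos, hN, hD2]
    have step : c⁻¹ * (μ ^ 2 + ‖ξ‖ ^ 2 + ‖η‖ ^ 2) ^ ((p - 2) / 2)
          * (‖ξ‖ ^ 2 + ‖η‖ ^ 2 - 2 * (inner ℝ ξ η : ℝ))
        ≤ C1 p ^ 2 * (μ ^ 2 + ‖ξ‖ ^ 2 + ‖η‖ ^ 2) ^ ((p - 2) / 2)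
          * (‖ξ‖ ^ 2 + ‖η‖ ^ 2 - 2 * (inner ℝ ξ η : ℝ)) :=
      mul_le_mul_of_nonneg_right (mul_le_mul_of_nonneg_right hcinv hT0) hDpos'.le
    linarith [H.1]
  · rw [div_le_iff₀ hDpos, hN, hD2]
    have step : C2 p ^ 2 * (μ ^ 2 + ‖ξ‖ ^ 2 + ‖η‖ ^ 2) ^ ((p - 2) / 2)
          * (‖ξ‖ ^ 2 + ‖η‖ ^ 2 - 2 * (inner ℝ ξ η : ℝ))
        ≤ c * (μ ^ 2 + ‖ξ‖ ^ 2 + ‖η‖ ^ 2) ^ ((p - 2) / 2)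
          * (‖ξ‖ ^ 2 + ‖η‖ ^ 2 - 2 * (inner ℝ ξ η : ℝ)) :=
      mul_le_mul_of_nonneg_right (mul_le_mul_of_nonneg_right hC2c hT0) hDpos'.le
    linarith [H.2]
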